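/- arXiv:1808.07611 — 2 statements merged into one kernel-verified Lean document; each statement's English description precedes it below -/
import Mathlib

section
/- Let $W$ be an $n \times n$ Hermitian matrix, let $\lambda_i(W)$ be an eigenvalue with unit eigenvector $u$, and let $x_k$ denote the $k$-th coordinate of $u$. Let $W_k$ be the matrix with the $k$-th row and column removed, with eigenvalues $\lambda_j(W_k)$ and orthonormal eigenvectors $u_j(W_k)$, and let $a_k$ be the $k$-th column of $W$ with the $k$-th entry removed. If no eigenvalue of $W_k$ equals $\lambda_i(W)$, then $|x_k|^2 = \left(1 + \sum_{j=1}^{n-1} (\lambda_j(W_k) - \lambda_i(W))^{-2} |u_j(W_k)^* a_k|^2\right)^{-1}$. -/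
open Matrix

private lemma star_mul_self_cx (z : ℂ) : star z * z = ((‖z‖ ^ 2 : ℝ) : ℂ) := by
  rw [Complex.star_def, ← Complex.normSq_eq_conj_mul_self, Complex.normSq_eq_norm_sq]

/-- Formula for an eigenvector coordinate of a Hermitian matrix in terms of the
spectral data of the minor (Lemma 41 of Tao–Vu). -/
theorem eigenvector_coordinate_formula (n : ℕ)
    (W : Matrix (Fin (n + 1)) (Fin (n + 1)) ℂ) (hW : W.IsHermitian)
    (μ : ℝ) (u : Fin (n + 1) → ℂ)
    (hu : W *ᵥ u = (μ : ℂ) • u) (hunit : star u ⬝ᵥ u = 1)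
    (k : Fin (n + 1))
    (Wk : Matrix (Fin n) (Fin n) ℂ) (hWk : Wk = W.submatrix k.succAbove k.succAbove)
    (a : Fin n → ℂ) (ha : ∀ j, a j = W (k.succAbove j) k)
    (lam : Fin n → ℝ) (v : Fin n → Fin n → ℂ)
    (hv : ∀ j, Wk *ᵥ v j = (lam j : ℂ) • v j)
    (horth : ∀ i j, star (v i) ⬝ᵥ v j = if i = j then 1 else 0)
    (hne : ∀ j, lam j ≠ μ) :
    ‖u k‖ ^ 2 = (1 + ∑ j, ((lam j - μ) ^ 2)⁻¹ * ‖star (v j) ⬝ᵥ a‖ ^ 2)⁻¹ := by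
  classical
  have hWkHerm : Wk.IsHermitian := by rw [hWk]; exact hW.submatrix _
  set u' : Fin n → ℂ := fun i => u (k.succAbove i) with hu'def
  set c : Fin n → ℂ := fun j => star (v j) ⬝ᵥ u' with hcdef
  set b : Fin n → ℂ := fun j => star (v j) ⬝ᵥ a with hbdef
  -- row equations for rows ≠ k
  have hrow : ∀ i : Fin n, (μ : ℂ) * u' i - (Wk *ᵥ u') i = u k * a i := by
    intro i
    have h := congrFun hu (k.succAbove i)
    simp only [mulVec, dotProduct, Pi.smul_apply, smul_eq_mul] at h
    rw [Fin.sum_univ_succAbove (fun m => W (k.succAbove i) m * u m) k] at h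
    have hW' : (Wk *ᵥ u') i
        = ∑ l, W (k.succAbove i) (k.succAbove l) * u (k.succAbove l) := by
      simp [mulVec, dotProduct, hWk, hu'def]
    rw [hW', ha i]
    linear_combination -h
  -- key identity
  have key : ∀ j : Fin n, ((μ : ℂ) - (lam j : ℂ)) * c j = u k * b j := by
    intro j
    have hvj : star (v j) ᵥ* Wk = (lam j : ℂ) • star (v j) := by
      have h1 := congrArg star (hv j)
      rw [star_mulVec, hWkHerm.eq] at h1
      rw [h1, star_smul]
      simp
    have h2 : star (v j) ⬝ᵥ ((μ : ℂ) • u' - Wk *ᵥ u') = star (v j) ⬝ᵥ (u k • a) := by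
      congr 1
      funext i
      simpa using hrow i
    rw [dotProduct_sub, dotProduct_smul, dotProduct_smul, dotProduct_mulVec, hvj,
      smul_dotProduct] at h2
    simp only [smul_eq_mul] at h2
    linear_combination h2
  -- Parseval
  have hpar : ∑ j, ‖c j‖ ^ 2 = ∑ i, ‖u' i‖ ^ 2 := by
    set V : Matrix (Fin n) (Fin n) ℂ := Matrix.of (fun j i => star (v j i)) with hVdef
    have hVV : V * Vᴴ = 1 := by
      ext j l
      have := horth j l
      simpa [Matrix.mul_apply, conjTranspose_apply, dotProduct, one_apply, hVdef] using this
    have hVV' : Vᴴ * V = 1 := mul_eq_one_comm.mp hVV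
    have hmv : ∀ j, (V *ᵥ u') j = c j := by
      intro j
      simp [mulVec, dotProduct, hVdef, hcdef]
    have hdp : star (V *ᵥ u') ⬝ᵥ (V *ᵥ u') = star u' ⬝ᵥ u' := by
      rw [star_mulVec, dotProduct_mulVec, vecMul_vecMul, hVV', vecMul_one]
    have hcx : ((∑ j, ‖c j‖ ^ 2 : ℝ) : ℂ) = ((∑ i, ‖u' i‖ ^ 2 : ℝ) : ℂ) := by
      push_cast
      calc (∑ j, (‖c j‖ ^ 2 : ℂ)) = ∑ j, star ((V *ᵥ u') j) * (V *ᵥ u') j := by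
            refine Finset.sum_congr rfl fun j _ => ?_
            rw [hmv j, star_mul_self_cx]
            push_cast; ring
        _ = star (V *ᵥ u') ⬝ᵥ (V *ᵥ u') := by simp [dotProduct]
        _ = star u' ⬝ᵥ u' := hdp
        _ = ∑ i, (‖u' i‖ ^ 2 : ℂ) := by
            simp only [dotProduct, Pi.star_apply]
            refine Finset.sum_congr rfl fun i _ => ?_
            rw [star_mul_self_cx]; push_cast; ring
    exact_mod_cast hcx
  -- unit norm split
  have hunit' : ‖u k‖ ^ 2 + ∑ i, ‖u' i‖ ^ 2 = 1 := by
    have hcx : ((‖u k‖ ^ 2 + ∑ i, ‖u' i‖ ^ 2 : ℝ) : ℂ) = 1 := by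
      rw [← hunit]
      simp only [dotProduct, Pi.star_apply]
      rw [Fin.sum_univ_succAbove (fun m => star (u m) * u m) k]
      push_cast
      rw [show star (u k) * u k = ((‖u k‖ ^ 2 : ℝ) : ℂ) from star_mul_self_cx _]
      congr 1
      · push_cast; ring
      · refine (Finset.sum_congr rfl fun i _ => ?_).symm
        rw [star_mul_self_cx]; push_cast; ring
    exact_mod_cast hcx
  -- per-term norm relation
  have hterm : ∀ j, ‖c j‖ ^ 2 = ((lam j - μ) ^ 2)⁻¹ * ‖b j‖ ^ 2 * ‖u k‖ ^ 2 := by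
    intro j
    have h1 := congrArg norm (key j)
    rw [norm_mul, norm_mul] at h1
    have h2 : ‖((μ : ℂ) - (lam j : ℂ))‖ = |μ - lam j| := by
      rw [← Complex.ofReal_sub, Complex.norm_real, Real.norm_eq_abs]
    rw [h2] at h1
    have h3 : |μ - lam j| ^ 2 = (lam j - μ) ^ 2 := by
      rw [sq_abs]; ring
    have h4 : (lam j - μ) ^ 2 ≠ 0 := pow_ne_zero _ (sub_ne_zero.mpr (hne j))
    have h5 : |μ - lam j| ^ 2 * ‖c j‖ ^ 2 = ‖u k‖ ^ 2 * ‖b j‖ ^ 2 := by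
      rw [← mul_pow, ← mul_pow, h1]
    rw [h3] at h5
    rw [inv_mul_eq_div, div_mul_eq_mul_div, eq_div_iff h4]
    linear_combination h5
  -- final algebra
  set S : ℝ := ∑ j, ((lam j - μ) ^ 2)⁻¹ * ‖b j‖ ^ 2 with hSdef
  have hS0 : 0 ≤ S := Finset.sum_nonneg fun j _ => by positivity
  have hmain : ‖u k‖ ^ 2 * (1 + S) = 1 := by
    have : ∑ j, ‖c j‖ ^ 2 = S * ‖u k‖ ^ 2 := by
      rw [hSdef, Finset.sum_mul]
      exact Finset.sum_congr rfl fun j _ => hterm j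
    nlinarith [hunit', hpar, this]
  have h1S : (1 : ℝ) + S ≠ 0 := by positivity
  rw [inv_eq_one_div, eq_div_iff h1S]
  exact hmain
end

section
/- Let $W$ be an $n \times n$ Hermitian matrix, $z = x + i\eta$ with $\eta > 0$, and let $\Sigma$ be a real diagonal matrix with diagonal entries in $[0,1]$, and $\Sigma^{(k)}$ the $(n-1)\times(n-1)$ diagonal matrix obtained by deleting the $k$-th diagonal entry. Then $\left|\operatorname{tr}\big[(W - zI)^{-1}\Sigma\big] - \operatorname{tr}\big[(W_k - zI)^{-1}\Sigma^{(k)}\big]\right| \le \frac{1}{\eta}$, where $W_k$ is the minor of $W$ with the $k$-th row and column removed. -/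
open Matrix
lemma herm_dot_real {m : Type*} [Fintype m] (H : Matrix m m ℂ) (hH : H.IsHermitian)
    (v : m → ℂ) : (star v ⬝ᵥ H *ᵥ v).im = 0 := by
  have h : star (star v ⬝ᵥ H *ᵥ v) = star v ⬝ᵥ H *ᵥ v := by
    calc star (star v ⬝ᵥ H *ᵥ v) = star (H *ᵥ v) ⬝ᵥ star (star v) := (star_dotProduct_star _ _).symm
    _ = (star v ᵥ* Hᴴ) ⬝ᵥ v := by rw [star_mulVec, star_star]
    _ = star v ⬝ᵥ H *ᵥ v := by rw [hH.eq, ← dotProduct_mulVec]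
  have := congrArg Complex.im h
  simp only [Complex.star_def, Complex.conj_im] at this
  linarith

lemma herm_shift_isUnit_det {m : Type*} [Fintype m] [DecidableEq m]
    (H : Matrix m m ℂ) (hH : H.IsHermitian) (z : ℂ) (hz : z.im ≠ 0) :
    IsUnit (H - z • 1).det := by
  rw [isUnit_iff_ne_zero]
  intro hdet
  obtain ⟨v, hv, hmv⟩ := Matrix.exists_mulVec_eq_zero_iff.2 hdet
  have hdot : star v ⬝ᵥ (H - z • 1) *ᵥ v = 0 := by rw [hmv, dotProduct_zero]
  have hexp : star v ⬝ᵥ (H - z • 1) *ᵥ v = star v ⬝ᵥ H *ᵥ v - z * (star v ⬝ᵥ v) := by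
    rw [sub_mulVec, dotProduct_sub, smul_mulVec, one_mulVec, dotProduct_smul, smul_eq_mul]
  have hvv : star v ⬝ᵥ v = ((∑ i, Complex.normSq (v i) : ℝ) : ℂ) := by
    push_cast
    simp [dotProduct, Complex.star_def, Complex.normSq_eq_conj_mul_self]
  have hvvpos : 0 < ∑ i, Complex.normSq (v i) := by
    obtain ⟨i, hi⟩ := Function.ne_iff.1 hv
    exact Finset.sum_pos' (fun j _ => Complex.normSq_nonneg _)
      ⟨i, Finset.mem_univ i, by simpa [Complex.normSq_pos] using hi⟩
  have him := congrArg Complex.im (hexp ▸ hdot)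
  rw [hvv] at him
  simp only [Complex.sub_im, herm_dot_real H hH v, Complex.mul_im, Complex.ofReal_re,
    Complex.ofReal_im, Complex.zero_im, mul_zero, add_zero, zero_sub, neg_eq_zero] at him
  rw [zero_add] at him
  rcases mul_eq_zero.1 him with h | h
  · exact hz h
  · linarith
lemma ward {m : Type*} [Fintype m] [DecidableEq m] (H : Matrix m m ℂ) (hH : H.IsHermitian)
    (z : ℂ) (hdet : IsUnit (H - z • 1).det) :
    ((H - z • 1)⁻¹ - ((H - z • 1)⁻¹)ᴴ
      = (z - starRingEnd ℂ z) • ((H - z • 1)⁻¹ * ((H - z • 1)⁻¹)ᴴ))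
    ∧ ((H - z • 1)⁻¹ - ((H - z • 1)⁻¹)ᴴ
      = (z - starRingEnd ℂ z) • (((H - z • 1)⁻¹)ᴴ * (H - z • 1)⁻¹)) := by
  set M := H - z • 1 with hM
  set G := M⁻¹ with hG
  have hMH : Mᴴ = H - starRingEnd ℂ z • 1 := by
    rw [hM, conjTranspose_sub, hH.eq, conjTranspose_smul, conjTranspose_one]; rfl
  have hMdetH : IsUnit Mᴴ.det := by
    rw [det_conjTranspose]
    exact hdet.star
  have h1 : M * G = 1 := mul_nonsing_inv _ hdet
  have h2 : G * M = 1 := nonsing_inv_mul _ hdet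
  have hGH : Gᴴ = (Mᴴ)⁻¹ := conjTranspose_nonsing_inv _
  have h3 : Mᴴ * Gᴴ = 1 := by rw [hGH]; exact mul_nonsing_inv _ hMdetH
  have h4 : Gᴴ * Mᴴ = 1 := by rw [hGH]; exact nonsing_inv_mul _ hMdetH
  have hdiff : Mᴴ - M = (z - starRingEnd ℂ z) • 1 := by
    rw [hMH, hM, sub_smul]
    abel
  constructor
  · calc G - Gᴴ = G * (Mᴴ * Gᴴ) - (G * M) * Gᴴ := by rw [h3, h2, Matrix.mul_one, Matrix.one_mul]
    _ = G * (Mᴴ - M) * Gᴴ := by simp only [Matrix.mul_sub, Matrix.sub_mul, Matrix.mul_assoc]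
    _ = (z - starRingEnd ℂ z) • (G * Gᴴ) := by
        rw [hdiff]; simp only [Matrix.smul_mul, Matrix.mul_smul, Matrix.mul_one]
  · calc G - Gᴴ = (Gᴴ * Mᴴ) * G - Gᴴ * (M * G) := by rw [h4, h1, Matrix.mul_one, Matrix.one_mul]
    _ = Gᴴ * (Mᴴ - M) * G := by simp only [Matrix.mul_sub, Matrix.sub_mul, Matrix.mul_assoc]
    _ = (z - starRingEnd ℂ z) • (Gᴴ * G) := by
        rw [hdiff]; simp only [Matrix.smul_mul, Matrix.mul_smul, Matrix.mul_one]


/-- Weighted trace stability under removing one row and column: the weighted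
resolvent trace changes by at most `1/η`. -/
theorem weighted_trace_minor_stability (n : ℕ)
    (W : Matrix (Fin (n + 1)) (Fin (n + 1)) ℂ) (hW : W.IsHermitian)
    (x η : ℝ) (hη : 0 < η) (z : ℂ) (hz : z = x + η * Complex.I)
    (σ : Fin (n + 1) → ℝ) (hσ : ∀ i, σ i ∈ Set.Icc (0 : ℝ) 1) (k : Fin (n + 1)) :
    ‖((W - z • 1)⁻¹ * Matrix.diagonal (fun i => (σ i : ℂ))).trace
        - ((W.submatrix k.succAbove k.succAbove - z • 1)⁻¹
            * Matrix.diagonal (fun j => (σ (k.succAbove j) : ℂ))).trace‖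
      ≤ 1 / η := by
  set sa := k.succAbove with hsa
  set M := W - z • 1 with hMdef
  set A := W.submatrix sa sa - z • 1 with hAdef
  have hzim : z.im = η := by rw [hz]; simp
  have hdetM : IsUnit M.det := herm_shift_isUnit_det W hW z (by rw [hzim]; exact hη.ne')
  have hWA : (W.submatrix sa sa).IsHermitian := hW.submatrix _
  have hdetA : IsUnit A.det := herm_shift_isUnit_det _ hWA z (by rw [hzim]; exact hη.ne')
  set G := M⁻¹ with hGdef
  -- block decomposition
  set e : Fin (n + 1) ≃ (Fin n ⊕ PUnit.{1}) :=
    (finSuccEquiv' k).trans (Equiv.optionEquivSumPUnit.{0,0} (Fin n)) with he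
  have hesyml : ∀ j : Fin n, e.symm (Sum.inl j) = sa j := by
    intro j
    simp [he, Equiv.symm_trans_apply, finSuccEquiv'_symm_some, hsa]
  have hesymr : e.symm (Sum.inr PUnit.unit) = k := by
    simp [he, Equiv.symm_trans_apply, finSuccEquiv'_symm_none]
  set B : Matrix (Fin n) PUnit.{1} ℂ := Matrix.of (fun j _ => M (sa j) k) with hBdef
  set C : Matrix PUnit.{1} (Fin n) ℂ := Matrix.of (fun _ j => M k (sa j)) with hCdef
  set D : Matrix PUnit.{1} PUnit.{1} ℂ := Matrix.of (fun _ _ => M k k) with hDdef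
  have hblock : M.submatrix e.symm e.symm = fromBlocks A B C D := by
    ext i j
    cases i with
    | inl i =>
      cases j with
      | inl j =>
        simp only [submatrix_apply, hesyml, fromBlocks_apply₁₁, hAdef, hMdef, Matrix.sub_apply,
          Matrix.smul_apply, one_apply, smul_eq_mul, mul_ite, mul_one, mul_zero, submatrix_apply]
        simp only [hsa, Fin.succAbove_right_inj]
      | inr j =>
        cases j
        simp only [submatrix_apply, hesyml, hesymr, fromBlocks_apply₁₂, hBdef, of_apply]
    | inr i =>
      cases i
      cases j with
      | inl j =>
        simp only [submatrix_apply, hesyml, hesymr, fromBlocks_apply₂₁, hCdef, of_apply]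
      | inr j =>
        cases j
        simp only [submatrix_apply, hesymr, fromBlocks_apply₂₂, hDdef, of_apply]
  haveI iM : Invertible M := M.invertibleOfIsUnitDet hdetM
  haveI iF : Invertible (fromBlocks A B C D) := hblock ▸ submatrixEquivInvertible M e.symm e.symm
  haveI iA : Invertible A := A.invertibleOfIsUnitDet hdetA
  haveI iS : Invertible (D - C * ⅟A * B) := invertibleOfFromBlocks₁₁Invertible A B C D
  set S : Matrix PUnit.{1} PUnit.{1} ℂ := D - C * ⅟A * B with hSdef
  have hGblock : G.submatrix e.symm e.symm =
      fromBlocks (⅟A + ⅟A * B * ⅟S * C * ⅟A) (-(⅟A * B * ⅟S)) (-(⅟S * C * ⅟A)) ⅟S := by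
    rw [hGdef, ← Matrix.inv_submatrix_equiv M e.symm e.symm, hblock,
      ← invOf_eq_nonsing_inv]
    exact invOf_fromBlocks₁₁_eq A B C D
  -- entries of the block inverse
  have hGkk : G k k = ⅟S PUnit.unit PUnit.unit := by
    have h := congrFun (congrFun hGblock (Sum.inr PUnit.unit)) (Sum.inr PUnit.unit)
    simpa [submatrix_apply, hesymr] using h
  have hGjk : ∀ j : Fin n, G (sa j) k = -((⅟A * B * ⅟S) j PUnit.unit) := by
    intro j
    have h := congrFun (congrFun hGblock (Sum.inl j)) (Sum.inr PUnit.unit)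
    simpa [submatrix_apply, hesyml, hesymr] using h
  have hGkj : ∀ j : Fin n, G k (sa j) = -((⅟S * C * ⅟A) PUnit.unit j) := by
    intro j
    have h := congrFun (congrFun hGblock (Sum.inr PUnit.unit)) (Sum.inl j)
    simpa [submatrix_apply, hesyml, hesymr] using h
  have hGjj : ∀ j : Fin n, G (sa j) (sa j) = ⅟A j j + (⅟A * B * ⅟S * C * ⅟A) j j := by
    intro j
    have h := congrFun (congrFun hGblock (Sum.inl j)) (Sum.inl j)
    simpa [submatrix_apply, hesyml] using h
  have hS : S PUnit.unit PUnit.unit * G k k = 1 := by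
    have h := congrFun (congrFun (mul_invOf_self S) PUnit.unit) PUnit.unit
    rw [Matrix.mul_apply] at h
    simp only [Finset.univ_unique, Finset.sum_singleton, Matrix.one_apply_eq] at h
    rw [hGkk]
    exact h
  have hGkk0 : G k k ≠ 0 := by
    intro h0
    rw [h0, mul_zero] at hS
    exact zero_ne_one hS
  have hSval : S PUnit.unit PUnit.unit = (G k k)⁻¹ := by
    field_simp at hS ⊢
    linear_combination hS
  have hfact : (⅟A * B * ⅟S) * S * (⅟S * C * ⅟A) = ⅟A * B * ⅟S * C * ⅟A := by
    have h1 : (⅟S : Matrix PUnit.{1} PUnit.{1} ℂ) * S = 1 := invOf_mul_self S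
    calc (⅟A * B * ⅟S) * S * (⅟S * C * ⅟A)
        = ⅟A * B * ((⅟S * S) * (⅟S * (C * ⅟A))) := by simp only [Matrix.mul_assoc]
    _ = ⅟A * B * (⅟S * (C * ⅟A)) := by rw [h1, Matrix.one_mul]
    _ = ⅟A * B * ⅟S * C * ⅟A := by simp only [Matrix.mul_assoc]
  have hmid : ∀ j : Fin n, (⅟A * B * ⅟S * C * ⅟A) j j
      = G (sa j) k * G k (sa j) * (G k k)⁻¹ := by
    intro j
    rw [← hfact, Matrix.mul_apply]
    simp only [Finset.univ_unique, Finset.sum_singleton]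
    rw [Matrix.mul_apply]
    simp only [Finset.univ_unique, Finset.sum_singleton]
    have hx : (⅟A * B * ⅟S) j PUnit.unit = -(G (sa j) k) := by rw [hGjk j, neg_neg]
    have hy : (⅟S * C * ⅟A) PUnit.unit j = -(G k (sa j)) := by rw [hGkj j, neg_neg]
    have hd : (default : PUnit.{1}) = PUnit.unit := rfl
    rw [hd, hx, hy, hSval]
    ring
  have hdiag : ∀ j : Fin n, A⁻¹ j j
      = G (sa j) (sa j) - G (sa j) k * G k (sa j) * (G k k)⁻¹ := by
    intro j
    rw [← invOf_eq_nonsing_inv A]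
    have h := (hGjj j).symm
    rw [hmid j] at h
    linear_combination h
  -- traces
  have htr1 : (G * Matrix.diagonal (fun i => (σ i : ℂ))).trace = ∑ i, G i i * (σ i : ℂ) := by
    simp [Matrix.trace, Matrix.diag, Matrix.mul_diagonal]
  have htr2 : (A⁻¹ * Matrix.diagonal (fun j => (σ (sa j) : ℂ))).trace
      = ∑ j, A⁻¹ j j * (σ (sa j) : ℂ) := by
    simp [Matrix.trace, Matrix.diag, Matrix.mul_diagonal]
  set T : ℂ := ∑ i, (σ i : ℂ) * (G k i * G i k) with hTdef
  have key : (∑ i, G i i * (σ i : ℂ)) - ∑ j, A⁻¹ j j * (σ (sa j) : ℂ) = T * (G k k)⁻¹ := by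
    have hT : T = (σ k : ℂ) * (G k k * G k k)
        + ∑ j, (σ (sa j) : ℂ) * (G k (sa j) * G (sa j) k) := by
      rw [hTdef]
      exact Fin.sum_univ_succAbove (fun i => (σ i : ℂ) * (G k i * G i k)) k
    rw [Fin.sum_univ_succAbove (fun i => G i i * (σ i : ℂ)) k, hT, add_mul, Finset.sum_mul,
      add_sub_assoc, ← Finset.sum_sub_distrib]
    simp only [← hsa]
    congr 1
    · field_simp
    · refine Finset.sum_congr rfl fun j _ => ?_
      rw [hdiag j]
      ring
  -- Ward identity
  obtain ⟨hw1, hw2⟩ := ward W hW z hdetM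
  rw [← hMdef, ← hGdef] at hw1 hw2
  set s₁ := ∑ i, Complex.normSq (G k i) with hs₁
  set s₂ := ∑ i, Complex.normSq (G i k) with hs₂
  have hgg1 : (G * Gᴴ) k k = (s₁ : ℂ) := by
    rw [Matrix.mul_apply, hs₁]
    push_cast
    refine Finset.sum_congr rfl fun i _ => ?_
    rw [conjTranspose_apply, Complex.star_def, Complex.mul_conj]
  have hgg2 : (Gᴴ * G) k k = (s₂ : ℂ) := by
    rw [Matrix.mul_apply, hs₂]
    push_cast
    refine Finset.sum_congr rfl fun i _ => ?_
    rw [conjTranspose_apply, Complex.star_def,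
      ← Complex.normSq_eq_conj_mul_self]
  have hwkk1 : G k k - starRingEnd ℂ (G k k) = (z - starRingEnd ℂ z) * (s₁ : ℂ) := by
    have h := congrFun (congrFun hw1 k) k
    rw [Matrix.sub_apply, Matrix.smul_apply, conjTranspose_apply, Complex.star_def,
      smul_eq_mul, hgg1] at h
    exact h
  have hwkk2 : G k k - starRingEnd ℂ (G k k) = (z - starRingEnd ℂ z) * (s₂ : ℂ) := by
    have h := congrFun (congrFun hw2 k) k
    rw [Matrix.sub_apply, Matrix.smul_apply, conjTranspose_apply, Complex.star_def,
      smul_eq_mul, hgg2] at h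
    exact h
  have him1 : (G k k).im = η * s₁ := by
    rw [Complex.sub_conj, Complex.sub_conj] at hwkk1
    have h := congrArg Complex.im hwkk1
    simp only [Complex.mul_im, Complex.mul_re, Complex.ofReal_re, Complex.ofReal_im,
      Complex.I_re, Complex.I_im, hzim, mul_zero, mul_one, zero_mul, sub_zero, add_zero,
      zero_add, zero_sub] at h
    linarith
  have him2 : (G k k).im = η * s₂ := by
    rw [Complex.sub_conj, Complex.sub_conj] at hwkk2
    have h := congrArg Complex.im hwkk2
    simp only [Complex.mul_im, Complex.mul_re, Complex.ofReal_re, Complex.ofReal_im,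
      Complex.I_re, Complex.I_im, hzim, mul_zero, mul_one, zero_mul, sub_zero, add_zero,
      zero_add, zero_sub] at h
    linarith
  -- bound on T
  have hTb : ‖T‖ ≤ (s₁ + s₂) / 2 := by
    calc ‖T‖ ≤ ∑ i, ‖(σ i : ℂ) * (G k i * G i k)‖ := norm_sum_le _ _
    _ ≤ ∑ i, (Complex.normSq (G k i) + Complex.normSq (G i k)) / 2 := by
        refine Finset.sum_le_sum fun i _ => ?_
        have h0 := (hσ i).1
        have h1 := (hσ i).2
        have ha : Complex.normSq (G k i) = ‖G k i‖ ^ 2 := by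
          rw [Complex.sq_norm]
        have hb : Complex.normSq (G i k) = ‖G i k‖ ^ 2 := by
          rw [Complex.sq_norm]
        rw [norm_mul, norm_mul, Complex.norm_real, Real.norm_eq_abs, abs_of_nonneg h0, ha, hb]
        nlinarith [sq_nonneg (‖G k i‖ - ‖G i k‖), norm_nonneg (G k i), norm_nonneg (G i k),
          mul_nonneg (norm_nonneg (G k i)) (norm_nonneg (G i k))]
    _ = (s₁ + s₂) / 2 := by
        rw [hs₁, hs₂, ← Finset.sum_add_distrib, Finset.sum_div]
  have hs : (s₁ + s₂) / 2 = (G k k).im / η := by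
    rw [eq_div_iff hη.ne']
    linear_combination -(him1 + him2) / 2
  -- final estimate
  rw [htr1, htr2, key, norm_mul, norm_inv]
  have ha : 0 < ‖G k k‖ := norm_pos_iff.2 hGkk0
  have him_le : (G k k).im ≤ ‖G k k‖ := by
    exact Complex.im_le_norm _
  calc ‖T‖ * ‖G k k‖⁻¹ ≤ ((G k k).im / η) * ‖G k k‖⁻¹ := by
        apply mul_le_mul_of_nonneg_right _ (inv_nonneg.2 ha.le)
        rw [← hs]
        exact hTb
  _ ≤ (‖G k k‖ / η) * ‖G k k‖⁻¹ := by
        apply mul_le_mul_of_nonneg_right _ (inv_nonneg.2 ha.le)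
        gcongr
  _ = 1 / η := by
        field_simp [ha.ne', hη.ne']
end
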